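/- There exists a Lipschitz function f̂ : [0,1] → ℝ with f̂(0) < 0.0001, f̂(1) > 0.9999, and an open dense subset 𝒰 ⊆ [0,1] such that f̂ is differentiable with f̂'(x) = 0 for all x ∈ 𝒰. In particular, 𝒰 does not have full Lebesgue measure, since ∫₀¹ f̂'(x) dx = f̂(1) − f̂(0) > 0.9998 by the fundamental theorem of calculus for Lipschitz functions. -/

import Mathlib

open MeasureTheory Set Metric
open scoped ENNReal

theorem lipschitz_devil_staircase :
    ∃ (fh : ℝ → ℝ) (L : NNReal), LipschitzOnWith L fh (Set.Icc 0 1) ∧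
      fh 0 < 0.0001 ∧ fh 1 > 0.9999 ∧
      ∃ U : Set ℝ, IsOpen U ∧ U ⊆ Set.Icc 0 1 ∧ Set.Icc (0 : ℝ) 1 ⊆ closure U ∧
        (∀ x ∈ U, HasDerivAt fh 0 x) ∧
        MeasureTheory.volume U < MeasureTheory.volume (Set.Icc (0 : ℝ) 1) := by
  classical
  obtain ⟨e, he⟩ : ∃ e : ℕ → ℚ, Function.Surjective e := exists_surjective_nat ℚ
  set q : ℕ → ℝ := fun n => ((e n : ℚ) : ℝ) with hq
  set ε : ℝ := 1 / 2 ^ 20 with hεdef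
  have hεpos : 0 < ε := by norm_num [hεdef]
  set r : ℕ → ℝ := fun n => ε / 2 ^ n with hrdef
  have hrpos : ∀ n, 0 < r n := fun n => by positivity
  set U : Set ℝ := (⋃ n, Metric.ball (q n) (r n)) ∩ Ioo 0 1 with hUdef
  set A : Set ℝ := Icc (0:ℝ) 1 \ U with hAdef
  have hUopen : IsOpen U := (isOpen_iUnion fun n => isOpen_ball).inter isOpen_Ioo
  have hUsub : U ⊆ Icc 0 1 := inter_subset_right.trans Ioo_subset_Icc_self
  have hUA : Disjoint A U := disjoint_sdiff_left
  have hIccvol : volume (Icc (0:ℝ) 1) = 1 := by simp [Real.volume_Icc]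
  -- volume of U is small
  have hUvol : volume U ≤ ENNReal.ofReal (4 * ε) := by
    calc volume U ≤ volume (⋃ n, Metric.ball (q n) (r n)) :=
          measure_mono inter_subset_left
      _ ≤ ∑' n, volume (Metric.ball (q n) (r n)) := measure_iUnion_le _
      _ = ∑' n, ENNReal.ofReal (2 * ε) * ENNReal.ofReal ((1/2) ^ n) := by
          congr 1; funext n
          rw [Real.volume_ball, ← ENNReal.ofReal_mul (by positivity)]
          congr 1
          simp [hrdef]
          ring
      _ = ENNReal.ofReal (2 * ε) * ∑' n, ENNReal.ofReal ((1/2:ℝ) ^ n) :=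
          ENNReal.tsum_mul_left
      _ ≤ ENNReal.ofReal (4 * ε) := by
          have h1 : ∀ n : ℕ, ENNReal.ofReal ((1/2:ℝ) ^ n) = (2⁻¹ : ℝ≥0∞) ^ n := by
            intro n
            rw [ENNReal.ofReal_pow (by norm_num), one_div,
              ENNReal.ofReal_inv_of_pos two_pos, ENNReal.ofReal_ofNat]
          simp_rw [h1]
          rw [ENNReal.tsum_geometric]
          have h2 : (1 - 2⁻¹ : ℝ≥0∞)⁻¹ = 2 := by
            rw [show (1 - 2⁻¹ : ℝ≥0∞) = 2⁻¹ from
              ENNReal.sub_eq_of_eq_add (by simp)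
                ENNReal.inv_two_add_inv_two.symm]
            simp
          rw [h2]
          refine le_of_eq ?_
          rw [show (4:ℝ)*ε = 2*ε*2 by ring,
            ENNReal.ofReal_mul (by positivity : (0:ℝ) ≤ 2*ε), ENNReal.ofReal_ofNat]
  have hUvol1 : volume U < 1 := by
    refine lt_of_le_of_lt hUvol ?_
    rw [ENNReal.ofReal_lt_one]
    norm_num [hεdef]
  have hUfin : volume U ≠ ⊤ := (hUvol1.trans ENNReal.one_lt_top).ne
  -- A is measurable with finite measure
  have hAmeas : MeasurableSet A := measurableSet_Icc.diff hUopen.measurableSet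
  have hAfin : volume A ≤ 1 := by
    rw [← hIccvol]; exact measure_mono diff_subset
  have gfin : ∀ x : ℝ, volume (A ∩ Iic x) ≠ ⊤ := fun x =>
    ((measure_mono inter_subset_left).trans_lt
      (hAfin.trans_lt ENNReal.one_lt_top)).ne
  set f : ℝ → ℝ := fun x => (volume (A ∩ Iic x)).toReal with hfdef
  -- monotone and Lipschitz control
  have hmono : ∀ {x y : ℝ}, x ≤ y → f x ≤ f y := by
    intro x y h
    exact ENNReal.toReal_mono (gfin y)
      (measure_mono (inter_subset_inter_right _ (Iic_subset_Iic.2 h)))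
  have hupper : ∀ {x y : ℝ}, x ≤ y → f y ≤ f x + (y - x) := by
    intro x y h
    have hsub : A ∩ Iic y ⊆ (A ∩ Iic x) ∪ Ioc x y := by
      intro z hz
      rcases le_or_gt z x with hzx | hzx
      · exact Or.inl ⟨hz.1, hzx⟩
      · exact Or.inr ⟨hzx, hz.2⟩
    have : volume (A ∩ Iic y) ≤ volume (A ∩ Iic x) + ENNReal.ofReal (y - x) := by
      calc volume (A ∩ Iic y) ≤ volume ((A ∩ Iic x) ∪ Ioc x y) := measure_mono hsub
        _ ≤ volume (A ∩ Iic x) + volume (Ioc x y) := measure_union_le _ _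
        _ = volume (A ∩ Iic x) + ENNReal.ofReal (y - x) := by rw [Real.volume_Ioc]
    have := ENNReal.toReal_mono (ENNReal.add_ne_top.2 ⟨gfin x, ENNReal.ofReal_ne_top⟩) this
    rwa [ENNReal.toReal_add (gfin x) ENNReal.ofReal_ne_top,
      ENNReal.toReal_ofReal (by linarith)] at this
  have hlip : LipschitzWith 1 f := by
    refine LipschitzWith.of_dist_le_mul fun x y => ?_
    rw [Real.dist_eq, Real.dist_eq, NNReal.coe_one, one_mul]
    rcases le_total x y with h | h
    · have h1 := hmono h
      have h2 := hupper h
      rw [abs_sub_comm, abs_of_nonneg (by linarith), abs_of_nonpos (by linarith)]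
      linarith
    · have h1 := hmono h
      have h2 := hupper h
      rw [abs_of_nonneg (by linarith), abs_of_nonneg (by linarith)]
      linarith
  refine ⟨f, 1, hlip.lipschitzOnWith, ?_, ?_, U, hUopen, hUsub, ?_, ?_, ?_⟩
  · -- f 0 < 0.0001
    have : A ∩ Iic 0 ⊆ {0} := by
      intro z hz
      have h1 : 0 ≤ z := hz.1.1.1
      have h2 : z ≤ 0 := hz.2
      simp only [mem_singleton_iff]
      exact le_antisymm h2 h1
    have h0 : volume (A ∩ Iic 0) = 0 :=
      le_antisymm ((measure_mono this).trans (by simp)) zero_le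
    simp only [hfdef, h0]
    norm_num
  · -- f 1 > 0.9999
    have hA1 : A ∩ Iic 1 = A := by
      apply inter_eq_left.2
      intro z hz
      exact hz.1.2
    have hvolA : volume A = 1 - volume U := by
      rw [hAdef, measure_diff hUsub hUopen.measurableSet.nullMeasurableSet hUfin,
        hIccvol]
    have hUreal : (volume U).toReal ≤ 4 * ε := by
      have := ENNReal.toReal_mono ENNReal.ofReal_ne_top hUvol
      rwa [ENNReal.toReal_ofReal (by positivity)] at this
    have : f 1 = 1 - (volume U).toReal := by
      rw [hfdef]
      simp only [hA1, hvolA]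
      rw [ENNReal.toReal_sub_of_le hUvol1.le ENNReal.one_ne_top, ENNReal.toReal_one]
    rw [this]
    have h5 : (volume U).toReal < 0.0001 := hUreal.trans_lt (by norm_num [hεdef])
    norm_num at h5 ⊢
    linarith
  · -- density
    have h1 : Ioo (0:ℝ) 1 ⊆ closure U := by
      intro x hx
      rw [_root_.mem_closure_iff]
      intro O hO hxO
      obtain ⟨a, ha⟩ := Rat.denseRange_cast.exists_mem_open (hO.inter isOpen_Ioo)
        ⟨x, hxO, hx⟩
      refine ⟨((a:ℚ):ℝ), ha.1, ?_⟩
      rw [hUdef]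
      refine ⟨?_, ha.2⟩
      obtain ⟨n, hn⟩ := he a
      refine mem_iUnion.2 ⟨n, ?_⟩
      have : q n = ((a:ℚ):ℝ) := by rw [hq]; exact_mod_cast congrArg _ hn
      rw [this]
      exact mem_ball_self (hrpos _)
    calc Icc (0:ℝ) 1 = closure (Ioo (0:ℝ) 1) := (closure_Ioo (by norm_num)).symm
      _ ⊆ closure (closure U) := closure_mono h1
      _ = closure U := closure_closure
  · -- derivative zero on U
    intro x hx
    obtain ⟨δ, hδpos, hδ⟩ := Metric.isOpen_iff.1 hUopen x hx
    have hconst : ∀ y ∈ Metric.ball x δ, f y = f x := by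
      intro y hy
      rw [Real.ball_eq_Ioo] at hδ hy
      have hkey : A ∩ Iic y = A ∩ Iic x := by
        ext z
        simp only [mem_inter_iff, mem_Iic, and_congr_right_iff]
        intro hzA
        constructor
        · intro hzy
          by_contra hzx
          push_neg at hzx
          have : z ∈ Ioo (x - δ) (x + δ) :=
            ⟨by linarith [hy.1], by linarith [hy.2]⟩
          exact (hUA.ne_of_mem hzA (hδ this)) rfl
        · intro hzx
          by_contra hzy
          push_neg at hzy
          have : z ∈ Ioo (x - δ) (x + δ) :=
            ⟨by linarith [hy.1], by linarith [hy.2]⟩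
          exact (hUA.ne_of_mem hzA (hδ this)) rfl
      simp [hfdef, hkey]
    have heq : f =ᶠ[nhds x] fun _ => f x :=
      Filter.eventuallyEq_of_mem (Metric.ball_mem_nhds x hδpos) hconst
    exact (hasDerivAt_const x (f x)).congr_of_eventuallyEq heq
  · rw [hIccvol]; exact hUvol1
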